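/- Let α < β be reals, I ⊆ ℕ nonempty, and (a_i, b_i)_{i∈I} a family with α < a_i < b_i < β for all i ∈ I, such that the closed intervals [a_i, b_i] are pairwise disjoint. Then there exists a continuous monotone increasing function f : [α,β] → [0,1] with f(α) = 0, f(β) = 1, and f constant on each interval [a_i, b_i]. -/

import Mathlib

open Set MeasureTheory Filter Topology

namespace Stmt12Aux

instance : IsTopologicalAddGroup Bool :=
  { continuous_add := continuous_of_discreteTopology
    continuous_neg := continuous_of_discreteTopology }

instance : NeBot (𝓝[≠] (0 : ℕ → Bool)) := by
  have h0 : (0 : ℕ → Bool) = fun _ => false := rfl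
  have htend : Tendsto (fun n : ℕ => fun m : ℕ => decide (m = n)) atTop
      (𝓝[≠] (0 : ℕ → Bool)) := by
    rw [tendsto_nhdsWithin_iff]
    constructor
    · rw [tendsto_pi_nhds]
      intro m
      rw [h0]
      apply tendsto_nhds_of_eventually_eq
      filter_upwards [eventually_gt_atTop m] with n hn
      simp [Nat.ne_of_lt hn]
    · filter_upwards with n
      intro h
      have := congrFun h n
      simp [h0] at this
  exact neBot_of_le htend

noncomputable def cantorMeasure : Measure (ℕ → Bool) :=
  Measure.addHaarMeasure (⊤ : TopologicalSpace.PositiveCompacts (ℕ → Bool))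

instance : IsProbabilityMeasure cantorMeasure := by
  constructor
  rw [← TopologicalSpace.PositiveCompacts.coe_top (α := ℕ → Bool)]
  exact Measure.addHaarMeasure_self

instance : Measure.IsAddHaarMeasure cantorMeasure :=
  Measure.isAddHaarMeasure_addHaarMeasure _

instance : NullSingletonClass cantorMeasure := Measure.IsAddHaarMeasure.nullSingletonClass _

end Stmt12Aux

theorem stmt12 (α β : ℝ) (hαβ : α < β) (I : Set ℕ) (hI : I.Nonempty)
    (a b : ℕ → ℝ)
    (hab : ∀ i ∈ I, α < a i ∧ a i < b i ∧ b i < β)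
    (hdisj : ∀ i ∈ I, ∀ j ∈ I, i ≠ j →
      Disjoint (Set.Icc (a i) (b i)) (Set.Icc (a j) (b j))) :
    ∃ f : ℝ → ℝ, ContinuousOn f (Set.Icc α β) ∧ MonotoneOn f (Set.Icc α β) ∧
      (∀ x ∈ Set.Icc α β, f x ∈ Set.Icc (0 : ℝ) 1) ∧
      f α = 0 ∧ f β = 1 ∧
      ∀ i ∈ I, ∀ x ∈ Set.Icc (a i) (b i), f x = f (a i) := by
  classical
  set E : Set ℝ := Icc α β \ ⋃ i ∈ I, Ioo (a i) (b i) with hE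
  have hEclosed : IsClosed E :=
    isClosed_Icc.sdiff (isOpen_biUnion fun i _ => isOpen_Ioo)
  have haE : ∀ j ∈ I, a j ∈ E := by
    intro j hj
    obtain ⟨h1, h2, h3⟩ := hab j hj
    refine ⟨⟨h1.le, (h2.trans h3).le⟩, ?_⟩
    intro hmem
    simp only [mem_iUnion] at hmem
    obtain ⟨k, hk, hmemk⟩ := hmem
    by_cases hkj : k = j
    · subst hkj; exact lt_irrefl _ hmemk.1
    · exact (hdisj k hk j hj hkj).le_bot
        ⟨Ioo_subset_Icc_self hmemk, left_mem_Icc.2 h2.le⟩ 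
  have hbE : ∀ j ∈ I, b j ∈ E := by
    intro j hj
    obtain ⟨h1, h2, h3⟩ := hab j hj
    refine ⟨⟨(h1.trans h2).le, h3.le⟩, ?_⟩
    intro hmem
    simp only [mem_iUnion] at hmem
    obtain ⟨k, hk, hmemk⟩ := hmem
    by_cases hkj : k = j
    · subst hkj; exact lt_irrefl _ hmemk.2
    · exact (hdisj k hk j hj hkj).le_bot
        ⟨Ioo_subset_Icc_self hmemk, right_mem_Icc.2 h2.le⟩
  have hαE : α ∈ E := by
    refine ⟨left_mem_Icc.2 hαβ.le, ?_⟩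
    intro hmem
    simp only [mem_iUnion] at hmem
    obtain ⟨k, hk, hmemk⟩ := hmem
    exact absurd hmemk.1 (not_lt.2 (hab k hk).1.le)
  have hβE : β ∈ E := by
    refine ⟨right_mem_Icc.2 hαβ.le, ?_⟩
    intro hmem
    simp only [mem_iUnion] at hmem
    obtain ⟨k, hk, hmemk⟩ := hmem
    exact absurd hmemk.2 (not_lt.2 (hab k hk).2.2.le)
  -- right-approach lemma
  have hright : ∀ x ∈ E, x < β → (∀ j ∈ I, a j ≠ x) →
      ∀ ε : ℝ, 0 < ε → ∃ y ∈ E, y ≠ x ∧ |y - x| < ε := by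
    intro x hx hxβ hxa ε hε
    have hδ : 0 < min ε (β - x) := lt_min hε (by linarith)
    set y₀ := x + min ε (β - x) / 2 with hy₀
    have hy₀x : x < y₀ := by rw [hy₀]; linarith
    have hy₀β : y₀ < β := by
      have : min ε (β - x) ≤ β - x := min_le_right _ _
      simp only [hy₀]; linarith
    have hy₀ε : y₀ - x < ε := by
      have : min ε (β - x) ≤ ε := min_le_left _ _
      simp only [hy₀]; linarith
    by_cases hmem : y₀ ∈ ⋃ i ∈ I, Ioo (a i) (b i)
    · simp only [mem_iUnion] at hmem
      obtain ⟨j, hj, hmemj⟩ := hmem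
      have hxne : x ∉ ⋃ i ∈ I, Ioo (a i) (b i) := hx.2
      have hxle : x ≤ a j := by
        by_contra hlt
        push_neg at hlt
        exact hxne (mem_iUnion.2 ⟨j, mem_iUnion.2 ⟨hj, hlt, hy₀x.trans hmemj.2⟩⟩)
      have hxlt : x < a j := lt_of_le_of_ne hxle (fun h => hxa j hj h.symm)
      refine ⟨a j, haE j hj, ne_of_gt hxlt, ?_⟩
      rw [abs_sub_lt_iff]
      constructor <;> linarith [hmemj.1]
    · refine ⟨y₀, ⟨⟨le_trans hx.1.1 hy₀x.le, hy₀β.le⟩, hmem⟩, ne_of_gt hy₀x, ?_⟩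
      rw [abs_sub_lt_iff]
      constructor <;> linarith
  -- left-approach lemma
  have hleft : ∀ x ∈ E, α < x → (∀ j ∈ I, b j ≠ x) →
      ∀ ε : ℝ, 0 < ε → ∃ y ∈ E, y ≠ x ∧ |y - x| < ε := by
    intro x hx hαx hxb ε hε
    have hδ : 0 < min ε (x - α) := lt_min hε (by linarith)
    set y₀ := x - min ε (x - α) / 2 with hy₀
    have hy₀x : y₀ < x := by rw [hy₀]; linarith
    have hy₀α : α < y₀ := by
      have : min ε (x - α) ≤ x - α := min_le_right _ _
      simp only [hy₀]; linarith
    have hy₀ε : x - y₀ < ε := by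
      have : min ε (x - α) ≤ ε := min_le_left _ _
      simp only [hy₀]; linarith
    by_cases hmem : y₀ ∈ ⋃ i ∈ I, Ioo (a i) (b i)
    · simp only [mem_iUnion] at hmem
      obtain ⟨j, hj, hmemj⟩ := hmem
      have hxne : x ∉ ⋃ i ∈ I, Ioo (a i) (b i) := hx.2
      have hble : b j ≤ x := by
        by_contra hlt
        push_neg at hlt
        exact hxne (mem_iUnion.2 ⟨j, mem_iUnion.2 ⟨hj, hmemj.1.trans hy₀x, hlt⟩⟩)
      have hblt : b j < x := lt_of_le_of_ne hble (hxb j hj)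
      refine ⟨b j, hbE j hj, ne_of_lt hblt, ?_⟩
      rw [abs_sub_lt_iff]
      constructor <;> linarith [hmemj.2]
    · refine ⟨y₀, ⟨⟨hy₀α.le, le_trans hy₀x.le hx.1.2⟩, hmem⟩, ne_of_lt hy₀x, ?_⟩
      rw [abs_sub_lt_iff]
      constructor <;> linarith
  -- E is perfect
  have hperf : Perfect E := by
    refine ⟨hEclosed, ?_⟩
    intro x hx
    rw [accPt_iff_nhds]
    intro U hU
    obtain ⟨ε, hε, hball⟩ := Metric.mem_nhds_iff.1 hU
    have key : ∃ y ∈ E, y ≠ x ∧ |y - x| < ε := by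
      by_cases hxa : ∃ j ∈ I, a j = x
      · obtain ⟨j, hj, hajx⟩ := hxa
        obtain ⟨h1, h2, h3⟩ := hab j hj
        refine hleft x hx (hajx ▸ h1) ?_ ε hε
        intro k hk hbkx
        by_cases hkj : k = j
        · subst hkj; exact absurd (hbkx.trans hajx.symm) (ne_of_gt h2)
        · exact (hdisj k hk j hj hkj).le_bot
            ⟨right_mem_Icc.2 (hab k hk).2.1.le,
              by rw [hbkx, ← hajx]; exact left_mem_Icc.2 h2.le⟩
      · push_neg at hxa
        rcases lt_or_eq_of_le hx.1.2 with hxβ | hxβ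
        · exact hright x hx hxβ hxa ε hε
        · refine hleft x hx (hxβ ▸ hαβ) ?_ ε hε
          intro k hk
          rw [hxβ]
          exact ne_of_lt (hab k hk).2.2
    obtain ⟨y, hyE, hyx, hyε⟩ := key
    exact ⟨y, ⟨hball (by rwa [Metric.mem_ball, Real.dist_eq]), hyE⟩, hyx⟩
  obtain ⟨F, hFrange, hFcont, hFinj⟩ :=
    hperf.exists_nat_bool_injection ⟨α, hαE⟩
  have hFm : Measurable F := hFcont.measurable
  set μ : Measure ℝ := Measure.map F Stmt12Aux.cantorMeasure with hμ
  have : IsProbabilityMeasure μ := Measure.isProbabilityMeasure_map hFm.aemeasurable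
  -- singletons have measure zero
  have hμsing : ∀ x : ℝ, μ {x} = 0 := by
    intro x
    rw [hμ, Measure.map_apply hFm (measurableSet_singleton x)]
    have hsub : (F ⁻¹' {x}).Subsingleton := by
      intro y hy z hz
      exact hFinj (hy.trans hz.symm)
    exact hsub.countable.measure_zero _
  -- the open intervals have measure zero
  have hμIoo : ∀ i ∈ I, μ (Ioo (a i) (b i)) = 0 := by
    intro i hi
    rw [hμ, Measure.map_apply hFm measurableSet_Ioo]
    have : F ⁻¹' Ioo (a i) (b i) = ∅ := by
      ext s
      simp only [mem_preimage, mem_empty_iff_false, iff_false]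
      intro hmem
      exact (hFrange (mem_range_self s)).2
        (mem_iUnion.2 ⟨i, mem_iUnion.2 ⟨hi, hmem⟩⟩)
    rw [this, measure_empty]
  have hμIic_le : ∀ x : ℝ, x ≤ α → μ (Iic x) = 0 := by
    intro x hxα
    rw [hμ, Measure.map_apply hFm measurableSet_Iic]
    have hsub : F ⁻¹' Iic x ⊆ F ⁻¹' {α} := by
      intro s hs
      have h1 : α ≤ F s := (hFrange (mem_range_self s)).1.1
      have h2 : F s ≤ x := hs
      have : F s = α := le_antisymm (h2.trans hxα) h1
      simpa using this
    refine measure_mono_null hsub ?_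
    have hsing : (F ⁻¹' {α}).Subsingleton := fun y hy z hz =>
      hFinj (hy.trans hz.symm)
    exact hsing.countable.measure_zero _
  have hμIic_β : μ (Iic β) = 1 := by
    have h1 : μ (Ioi β) = 0 := by
      rw [hμ, Measure.map_apply hFm measurableSet_Ioi]
      have : F ⁻¹' Ioi β = ∅ := by
        ext s
        simp only [mem_preimage, mem_empty_iff_false, iff_false, mem_Ioi, not_lt]
        exact (hFrange (mem_range_self s)).1.2
      rw [this, measure_empty]
    have h2 := measure_union (μ := μ) (Iic_disjoint_Ioi (le_refl β)) measurableSet_Ioi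
    rw [Iic_union_Ioi, measure_univ, h1, add_zero] at h2
    exact h2.symm
  -- the candidate function
  set f : ℝ → ℝ := fun x => ProbabilityTheory.cdf μ x with hf
  have hmono : Monotone f := ProbabilityTheory.monotone_cdf μ
  have hcont : Continuous f := by
    rw [continuous_iff_continuousAt]
    intro x
    rw [hmono.continuousAt_iff_leftLim_eq_rightLim]
    have hr : Function.rightLim f x = f x :=
      (ProbabilityTheory.cdf μ).rightLim_eq x
    have hsing : (ProbabilityTheory.cdf μ).measure {x} = 0 := by
      rw [ProbabilityTheory.measure_cdf]
      exact hμsing x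
    rw [StieltjesFunction.measure_singleton] at hsing
    have hle : Function.leftLim f x ≤ f x := hmono.leftLim_le le_rfl
    have hge : f x - Function.leftLim f x ≤ 0 := by
      by_contra hpos
      push_neg at hpos
      exact absurd hsing (by
        rw [ENNReal.ofReal_eq_zero]; push_neg; linarith)
    have : Function.leftLim f x = f x := le_antisymm hle (by linarith)
    rw [this, hr]
  have hval : ∀ x : ℝ, f x = (μ (Iic x)).toReal :=
    fun x => ProbabilityTheory.cdf_eq_real μ x
  refine ⟨f, hcont.continuousOn, hmono.monotoneOn _, ?_, ?_, ?_, ?_⟩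
  · intro x _
    exact ⟨ProbabilityTheory.cdf_nonneg μ x, ProbabilityTheory.cdf_le_one μ x⟩
  · rw [hval, hμIic_le α le_rfl]; simp
  · rw [hval, hμIic_β]; simp
  · intro i hi x hx
    rw [hval, hval]
    congr 1
    have hIoc : μ (Ioc (a i) (b i)) = 0 := by
      refine measure_mono_null ?_ (measure_union_null (hμIoo i hi) (hμsing (b i)))
      intro y hy
      rcases lt_or_eq_of_le hy.2 with h | h
      · exact Or.inl ⟨hy.1, h⟩
      · exact Or.inr h
    have hle1 : μ (Iic x) ≤ μ (Iic (a i)) := by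
      calc μ (Iic x) ≤ μ (Iic (a i) ∪ Ioc (a i) x) := by
            refine measure_mono ?_
            intro y hy
            rcases le_or_gt y (a i) with h | h
            · exact Or.inl h
            · exact Or.inr ⟨h, hy⟩
          _ ≤ μ (Iic (a i)) + μ (Ioc (a i) x) := measure_union_le _ _
          _ = μ (Iic (a i)) := by
            rw [measure_mono_null (Ioc_subset_Ioc_right hx.2) hIoc, add_zero]
    exact le_antisymm hle1 (measure_mono (Iic_subset_Iic.2 hx.1))
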